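/- There exists an absolute constant C > 0 with the following property. Let F : ℝ → ℂ be integrable and compactly supported, let k ∈ ℝ, and let G(k,·) be a solution of the real-line scattering ODE with potential F at spectral parameter k. Then sup_{x ∈ ℝ} sqrt(log |a(k,x)|) ≤ C·∫_ℝ |F(t)| dt. (Each |a(k,x)| ≥ 1, so log |a(k,x)| ≥ 0.) -/

import Mathlib

open MeasureTheory Set

/-- The matrix potential `W(k,t)` for the real-line scattering ODE. -/
noncomputable def WmatLine (F : ℝ → ℂ) (k : ℂ) (t : ℝ) : Matrix (Fin 2) (Fin 2) ℂ :=
  !![0, F t * Complex.exp (2 * Complex.I * k * t);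
     (starRingEnd ℂ) (F t) * Complex.exp (-(2 * Complex.I * k * t)), 0]

/-- `G` is a solution of the real-line scattering ODE with potential `F`
at spectral parameter `k`. -/
def IsSolutionLine (F : ℝ → ℂ) (k : ℂ) (G : ℝ → Matrix (Fin 2) (Fin 2) ℂ) : Prop :=
  Continuous G ∧
  ∀ x : ℝ, ∀ i j : Fin 2,
    G x i j = (1 : Matrix (Fin 2) (Fin 2) ℂ) i j +
      ∫ t in Set.Iic x, (WmatLine F k t * G t) i j

set_option maxHeartbeats 1000000 in
theorem maximal_riemann_lebesgue :
    ∃ C : ℝ, 0 < C ∧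
      ∀ F : ℝ → ℂ, Integrable F → HasCompactSupport F →
      ∀ k : ℝ, ∀ G : ℝ → Matrix (Fin 2) (Fin 2) ℂ,
        IsSolutionLine F (k : ℂ) G →
        ∀ x : ℝ, Real.sqrt (Real.log (‖G x 0 0‖)) ≤
          C * ∫ t : ℝ, ‖F t‖ := by
  refine ⟨3, by norm_num, ?_⟩
  intro F hFi hFc k G hG x
  obtain ⟨hGc, hGeq⟩ := hG
  set f : ℝ → ℝ := fun t => ‖F t‖ with hf_def
  have hfnn : ∀ t, 0 ≤ f t := fun t => norm_nonneg _
  have hf : Integrable f := by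
    simpa [hf_def] using hFi.norm
  set y : ℝ := ∫ t, f t with hy_def
  have hy0 : 0 ≤ y := integral_nonneg hfnn
  -- scalar integral equations
  have ha : ∀ z : ℝ, G z 0 0 =
      1 + ∫ t in Iic z, F t * Complex.exp (2 * Complex.I * k * t) * G t 1 0 := by
    intro z
    have h := hGeq z 0 0
    have e1 : (fun t => (WmatLine F k t * G t) 0 0) =
        fun t => F t * Complex.exp (2 * Complex.I * k * t) * G t 1 0 := by
      funext t; simp [WmatLine, Matrix.mul_apply, Fin.sum_univ_two]
    rw [e1] at h
    simpa [Matrix.one_apply] using h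
  have hb : ∀ z : ℝ, G z 1 0 =
      ∫ t in Iic z, (starRingEnd ℂ) (F t) * Complex.exp (-(2 * Complex.I * k * t)) * G t 0 0 := by
    intro z
    have h := hGeq z 1 0
    have e1 : (fun t => (WmatLine F k t * G t) 1 0) =
        fun t => (starRingEnd ℂ) (F t) * Complex.exp (-(2 * Complex.I * k * t)) * G t 0 0 := by
      funext t; simp [WmatLine, Matrix.mul_apply, Fin.sum_univ_two]
    rw [e1] at h
    simpa [Matrix.one_apply] using h
  -- norms of integrands
  have hexp1 : ∀ t : ℝ, ‖Complex.exp (2 * Complex.I * k * t)‖ = 1 := by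
    intro t; rw [Complex.norm_exp]; norm_num [Complex.mul_re]
  have hexp2 : ∀ t : ℝ, ‖Complex.exp (-(2 * Complex.I * k * t))‖ = 1 := by
    intro t; rw [Complex.norm_exp]; norm_num [Complex.mul_re]
  have hnorm_a : ∀ t : ℝ,
      ‖F t * Complex.exp (2 * Complex.I * k * t) * G t 1 0‖
        = f t * ‖G t 1 0‖ := by
    intro t; simp [map_mul, hexp1 t, hf_def]
  have hnorm_b : ∀ t : ℝ,
      ‖(starRingEnd ℂ) (F t) * Complex.exp (-(2 * Complex.I * k * t)) * G t 0 0‖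
        = f t * ‖G t 0 0‖ := by
    intro t; simp [map_mul, hexp2 t, hf_def]
  -- continuity of entries
  have hca : Continuous fun t => G t 0 0 := hGc.matrix_elem 0 0
  have hcb : Continuous fun t => G t 1 0 := hGc.matrix_elem 1 0
  -- support radius
  obtain ⟨r, hr⟩ := hFc.isCompact.isBounded.subset_closedBall 0
  set R : ℝ := |r| + 1 with hR_def
  have hR1 : 1 ≤ R := le_add_of_nonneg_left (abs_nonneg r)
  have hsupp : ∀ t : ℝ, t ∉ Icc (-R) R → F t = 0 := by
    intro t ht
    by_contra h
    apply ht
    have h1 : t ∈ tsupport F := subset_tsupport F h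
    have h2 := hr h1
    rw [Metric.mem_closedBall, Real.dist_eq, sub_zero] at h2
    have : |t| ≤ R := le_trans h2 (le_trans (le_abs_self r) (by simp [hR_def]))
    exact abs_le.mp this
  set c : ℝ := -R - 1 with hc_def
  have hcd : c ≤ R := by linarith
  -- the max function
  set g : ℝ → ℝ := fun z => max (‖G z 0 0‖) (‖G z 1 0‖) with hg_def
  have hgcont : Continuous g := (continuous_norm.comp hca).max (continuous_norm.comp hcb)
  have hgnn : ∀ z, 0 ≤ g z := fun z => le_trans (norm_nonneg _) (le_max_left _ _)
  have hga : ∀ z, ‖G z 0 0‖ ≤ g z := fun z => le_max_left _ _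
  have hgb : ∀ z, ‖G z 1 0‖ ≤ g z := fun z => le_max_right _ _
  -- a priori bound on the compact interval
  obtain ⟨z₀, hz₀mem, hz₀'⟩ := isCompact_Icc.exists_isMaxOn (⟨c, le_refl c, hcd⟩ : (Icc c R).Nonempty)
    hgcont.continuousOn
  have hz₀ : ∀ t ∈ Icc c R, g t ≤ g z₀ := fun t ht => hz₀' ht
  set M : ℝ := max (g z₀) 1 with hM_def
  have hM1 : 1 ≤ M := le_max_right _ _
  have hM0 : 0 ≤ M := by linarith
  have hMbd : ∀ t ∈ Icc c R, g t ≤ M := fun t ht => le_trans (hz₀ t ht) (le_max_left _ _)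
  have hce1 : Continuous fun t : ℝ => Complex.exp (2 * Complex.I * k * t) :=
    Complex.continuous_exp.comp (continuous_const.mul Complex.continuous_ofReal)
  have hce2 : Continuous fun t : ℝ => Complex.exp (-(2 * Complex.I * k * t)) :=
    Complex.continuous_exp.comp (continuous_const.mul Complex.continuous_ofReal).neg
  -- global integrability of the two integrands
  have hIa : Integrable (fun t => F t * Complex.exp (2 * Complex.I * k * t) * G t 1 0) := by
    refine Integrable.mono' (hf.const_mul M) ?_ (Filter.Eventually.of_forall fun t => ?_)
    · exact (hFi.aestronglyMeasurable.mul hce1.aestronglyMeasurable).mul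
        hcb.aestronglyMeasurable
    · rw [hnorm_a t]
      by_cases ht : t ∈ Icc c R
      · have := le_trans (hgb t) (hMbd t ht)
        calc f t * ‖G t 1 0‖ ≤ f t * M := by
              exact mul_le_mul_of_nonneg_left this (hfnn t)
          _ = M * f t := mul_comm _ _
      · have : F t = 0 := hsupp t (fun hmem => ht ⟨by linarith [hmem.1], hmem.2⟩)
        simp [hf_def, this]
  have hIb : Integrable (fun t => (starRingEnd ℂ) (F t) * Complex.exp (-(2 * Complex.I * k * t)) * G t 0 0) := by
    refine Integrable.mono' (hf.const_mul M) ?_ (Filter.Eventually.of_forall fun t => ?_)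
    · exact (((Complex.continuous_conj.comp_aestronglyMeasurable hFi.aestronglyMeasurable)).mul
        hce2.aestronglyMeasurable).mul
        hca.aestronglyMeasurable
    · rw [hnorm_b t]
      by_cases ht : t ∈ Icc c R
      · have := le_trans (hga t) (hMbd t ht)
        calc f t * ‖G t 0 0‖ ≤ f t * M := by
              exact mul_le_mul_of_nonneg_left this (hfnn t)
          _ = M * f t := mul_comm _ _
      · have : F t = 0 := hsupp t (fun hmem => ht ⟨by linarith [hmem.1], hmem.2⟩)
        simp [hf_def, this]
  -- splitting lemmas
  have hdisj1 : ∀ u v : ℝ, Disjoint (Iic u) (Ioc u v) := by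
    intro u v
    rw [Set.disjoint_left]
    rintro t ht1 ht2
    exact absurd ht1 (not_le.mpr ht2.1)
  have hdisj2 : ∀ u v : ℝ, Disjoint (Ioc u v) (Ioi v) := by
    intro u v
    rw [Set.disjoint_left]
    rintro t ht1 ht2
    exact absurd ht1.2 (not_le.mpr ht2)
  have hsplitC : ∀ (φ : ℝ → ℂ), Integrable φ → ∀ u v : ℝ, u ≤ v →
      ∫ t in Iic v, φ t = (∫ t in Iic u, φ t) + ∫ t in Ioc u v, φ t := by
    intro φ hφ u v huv
    rw [← Iic_union_Ioc_eq_Iic huv, setIntegral_union (hdisj1 u v) measurableSet_Ioc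
      hφ.integrableOn hφ.integrableOn]
  have hsplitf : ∀ u v : ℝ, u ≤ v →
      ∫ t in Iic v, f t = (∫ t in Iic u, f t) + ∫ t in Ioc u v, f t := by
    intro u v huv
    rw [← Iic_union_Ioc_eq_Iic huv, setIntegral_union (hdisj1 u v) measurableSet_Ioc
      hf.integrableOn hf.integrableOn]
  have hsplitIoi : ∀ u v : ℝ, u ≤ v →
      ∫ t in Ioi u, f t = (∫ t in Ioc u v, f t) + ∫ t in Ioi v, f t := by
    intro u v huv
    rw [← Ioc_union_Ioi_eq_Ioi huv, setIntegral_union (hdisj2 u v) measurableSet_Ioi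
      hf.integrableOn hf.integrableOn]
  -- monotonicity of set integrals of f
  have hmono : ∀ s t : Set ℝ, MeasurableSet s → s ⊆ t →
      (∫ w in s, f w) ≤ ∫ w in t, f w := by
    intro s t hs hst
    refine setIntegral_mono_set hf.integrableOn (Filter.Eventually.of_forall hfnn) ?_
    exact HasSubset.Subset.eventuallyLE hst
  have hIocnn : ∀ u v : ℝ, 0 ≤ ∫ t in Ioc u v, f t := fun u v => setIntegral_nonneg measurableSet_Ioc (fun t _ => hfnn t)
  -- difference form of the integral equations
  have haD : ∀ u w : ℝ, u ≤ w → G w 0 0 = G u 0 0 +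
      ∫ t in Ioc u w, F t * Complex.exp (2 * Complex.I * k * t) * G t 1 0 := by
    intro u w huw
    rw [ha w, ha u, hsplitC _ hIa u w huw, add_assoc]
  have hbD : ∀ u w : ℝ, u ≤ w → G w 1 0 = G u 1 0 +
      ∫ t in Ioc u w, (starRingEnd ℂ) (F t) * Complex.exp (-(2 * Complex.I * k * t)) * G t 0 0 := by
    intro u w huw
    rw [hb w, hb u, hsplitC _ hIb u w huw]
  -- key doubling lemma
  have key : ∀ u v : ℝ, u ≤ v → (∫ t in Ioc u v, f t) ≤ 1/2 →
      ∀ w ∈ Icc u v, g w ≤ 2 * g u := by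
    intro u v huv hhalf
    obtain ⟨z, hzm, hz'⟩ := isCompact_Icc.exists_isMaxOn (⟨u, le_refl u, huv⟩ : (Icc u v).Nonempty)
      hgcont.continuousOn
    have hz : ∀ t ∈ Icc u v, g t ≤ g z := fun t ht => hz' ht
    set B := g z with hB_def
    have hBnn : 0 ≤ B := hgnn z
    have hstep : ∀ w ∈ Icc u v, g w ≤ g u + B * (1/2) := by
      intro w hw
      have habs : ∀ (ψ : ℝ → ℂ) (hψ : Integrable ψ)
          (hψn : ∀ t, ‖ψ t‖ = f t * ‖G t 1 0‖ ∨
                 ‖ψ t‖ = f t * ‖G t 0 0‖),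
          ‖∫ t in Ioc u w, ψ t‖ ≤ B * (1/2) := by
        intro ψ hψ hψn
        have h1 : ‖∫ t in Ioc u w, ψ t‖ ≤ ∫ t in Ioc u w, ‖ψ t‖ := by
          simpa using
            norm_integral_le_integral_norm (μ := volume.restrict (Ioc u w)) ψ
        have h2 : (∫ t in Ioc u w, ‖ψ t‖) ≤ ∫ t in Ioc u w, B * f t := by
          refine setIntegral_mono_on ?_ ?_ measurableSet_Ioc ?_
          · have : Integrable fun t => ‖ψ t‖ := by
              simpa using hψ.norm
            exact this.integrableOn
          · exact (hf.const_mul B).integrableOn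
          · intro t ht
            have htm : t ∈ Icc u v := ⟨ht.1.le, le_trans ht.2 hw.2⟩
            rcases hψn t with h | h <;> rw [h]
            · calc f t * ‖G t 1 0‖ ≤ f t * B :=
                    mul_le_mul_of_nonneg_left (le_trans (hgb t) (hz t htm)) (hfnn t)
                _ = B * f t := mul_comm _ _
            · calc f t * ‖G t 0 0‖ ≤ f t * B :=
                    mul_le_mul_of_nonneg_left (le_trans (hga t) (hz t htm)) (hfnn t)
                _ = B * f t := mul_comm _ _
        have h3 : (∫ t in Ioc u w, B * f t) ≤ B * (1/2) := by
          rw [integral_const_mul]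
          refine mul_le_mul_of_nonneg_left ?_ hBnn
          exact le_trans (hmono _ _ measurableSet_Ioc (Set.Ioc_subset_Ioc_right hw.2)) hhalf
        linarith
      have e1 : ‖G w 0 0‖ ≤ g u + B * (1/2) := by
        rw [haD u w hw.1]
        refine le_trans (norm_add_le _ _) ?_
        have := habs _ hIa (fun t => Or.inl (hnorm_a t))
        have := hga u
        linarith
      have e2 : ‖G w 1 0‖ ≤ g u + B * (1/2) := by
        rw [hbD u w hw.1]
        refine le_trans (norm_add_le _ _) ?_
        have := habs _ hIb (fun t => Or.inr (hnorm_b t))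
        have := hgb u
        linarith
      exact max_le e1 e2
    have hB2 : B ≤ 2 * g u := by
      have := hstep z hzm
      linarith
    intro w hw
    exact le_trans (hz w hw) hB2
  -- continuity of the primitive
  have hprim : Continuous fun v : ℝ => ∫ t in Iic v, f t := by
    have hid : ∀ v : ℝ, ∫ t in Iic v, f t = (∫ t in Iic 0, f t) + ∫ s in (0:ℝ)..v, f s := by
      intro v
      have := intervalIntegral.integral_Iic_sub_Iic (hf.integrableOn (s := Iic (0:ℝ)))
        (hf.integrableOn (s := Iic v))
      linarith
    exact Continuous.congr (continuous_const.add (hf.continuous_primitive 0)) (fun v => (hid v).symm)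
  -- tail vanishing
  have htail : ∀ u : ℝ, R ≤ u → ∫ t in Ioi u, f t = 0 := by
    intro u hu
    rw [setIntegral_congr_fun measurableSet_Ioi (g := fun _ => (0:ℝ)) ?_, integral_zero]
    intro t ht
    have : F t = 0 := hsupp t (fun hm => absurd hm.2 (not_le.mpr (lt_of_le_of_lt hu ht)))
    simp [hf_def, this]
  -- main induction
  have ind : ∀ n : ℕ, ∀ u : ℝ, (∫ t in Ioi u, f t) ≤ (n+1)/2 →
      ∀ w, u ≤ w → g w ≤ 2^(n+1) * g u := by
    intro n
    induction n with
    | zero =>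
      intro u hu w hw
      have h1 : (∫ t in Ioc u w, f t) ≤ 1/2 := by
        refine le_trans (hmono _ _ measurableSet_Ioc Set.Ioc_subset_Ioi_self) ?_
        simpa using hu
      simpa using key u w hw h1 w ⟨hw, le_refl w⟩
    | succ n IH =>
      intro u hu w hw
      have hpow : (2:ℝ) ≤ 2^(n+1+1) := by
        calc (2:ℝ) = 2^1 := (pow_one 2).symm
        _ ≤ 2^(n+1+1) := by
          refine pow_le_pow_right₀ one_le_two ?_
          omega
      by_cases hcase : (∫ t in Ioi u, f t) ≤ 1/2
      · have h1 : (∫ t in Ioc u w, f t) ≤ 1/2 :=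
          le_trans (hmono _ _ measurableSet_Ioc Set.Ioc_subset_Ioi_self) hcase
        have := key u w hw h1 w ⟨hw, le_refl w⟩
        nlinarith [hgnn u]
      · push_neg at hcase
        set w₁ : ℝ := max u R with hw₁_def
        have huw₁ : u ≤ w₁ := le_max_left _ _
        have hIoiw₁ : ∫ t in Ioi w₁, f t = 0 := htail w₁ (le_max_right _ _)
        have hφw₁ : (1:ℝ)/2 ≤ (∫ t in Iic w₁, f t) - ∫ t in Iic u, f t := by
          have h1 := hsplitIoi u w₁ huw₁
          have h2 := hsplitf u w₁ huw₁
          rw [hIoiw₁] at h1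
          linarith
        have hivt : (1:ℝ)/2 ∈ (fun v => (∫ t in Iic v, f t) - ∫ t in Iic u, f t) '' Icc u w₁ := by
          refine intermediate_value_Icc huw₁ ((hprim.sub continuous_const).continuousOn) ?_
          constructor
          · simp
          · simpa using hφw₁
        obtain ⟨v, hvm, hv⟩ := hivt
        have hv' : ∫ t in Ioc u v, f t = 1/2 := by
          have := hsplitf u v hvm.1
          simp only at hv
          linarith
        have htail2 : ∫ t in Ioi v, f t ≤ (n+1)/2 := by
          have := hsplitIoi u v hvm.1
          push_cast at hu
          linarith
        rcases le_total w v with h | h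
        · have := key u v hvm.1 (le_of_eq hv') w ⟨hw, h⟩
          nlinarith [hgnn u]
        · have h1 := IH v htail2 w h
          have h2 := key u v hvm.1 (le_of_eq hv') v ⟨hvm.1, le_refl v⟩
          calc g w ≤ 2^(n+1) * g v := h1
            _ ≤ 2^(n+1) * (2 * g u) := by
              refine mul_le_mul_of_nonneg_left h2 (by positivity)
            _ = 2^(n+1+1) * g u := by ring
  -- boundary values
  have hbdry : ∀ w : ℝ, w ≤ c → G w 0 0 = 1 ∧ G w 1 0 = 0 := by
    intro w hwc
    have hzero : ∀ t, t ∈ Iic w → F t = 0 := by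
      intro t ht
      refine hsupp t (fun hm => ?_)
      have : t ≤ c := le_trans ht hwc
      simp only [hc_def] at this
      linarith [hm.1]
    constructor
    · rw [ha w, setIntegral_congr_fun measurableSet_Iic (g := fun _ => (0:ℂ)) ?_, integral_zero, add_zero]
      intro t ht
      simp [hzero t ht]
    · rw [hb w, setIntegral_congr_fun measurableSet_Iic (g := fun _ => (0:ℂ)) ?_, integral_zero]
      intro t ht
      simp [hzero t ht]
  have hgc1 : g c = 1 := by
    obtain ⟨h1, h2⟩ := hbdry c (le_refl c)
    simp [hg_def, h1, h2]
  -- global bound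
  set n : ℕ := ⌈2*y⌉₊ with hn_def
  have hyn : y ≤ ((n:ℝ)+1)/2 := by
    have := Nat.le_ceil (2*y)
    rw [← hn_def] at this
    linarith
  have hIoic : ∫ t in Ioi c, f t ≤ y := by
    refine setIntegral_le_integral hf (Filter.Eventually.of_forall hfnn)
  have hbig : ∀ w : ℝ, ‖G w 0 0‖ ≤ 2^(n+1) := by
    intro w
    rcases le_total w c with h | h
    · rw [(hbdry w h).1]
      simp only [norm_one]
      calc (1:ℝ) = 2^0 := (pow_zero 2).symm
        _ ≤ 2^(n+1) := pow_le_pow_right₀ one_le_two (by omega)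
    · have := ind n c (le_trans hIoic hyn) w h
      rw [hgc1, mul_one] at this
      exact le_trans (hga w) this
  have hn_le : (n:ℝ) ≤ 2*y + 1 := by
    have := Nat.ceil_lt_add_one (by positivity : (0:ℝ) ≤ 2*y)
    rw [← hn_def] at this
    linarith
  have hIic_y : ∀ t : ℝ, (∫ s in Iic t, f s) ≤ y := by
    intro t
    rw [hy_def]
    exact setIntegral_le_integral hf (Filter.Eventually.of_forall hfnn)
  clear_value y n
  -- final combination
  have hkey : Real.log (‖G x 0 0‖) ≤ (3*y)^2 := by
    rcases le_or_gt (1/2 : ℝ) y with hy | hy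
    · -- large y
      have h1 : Real.log (‖G x 0 0‖) ≤ ((n:ℝ)+1) * Real.log 2 := by
        rcases le_or_gt (‖G x 0 0‖) 1 with h | h
        · refine le_trans (Real.log_nonpos (norm_nonneg _) h) ?_
          have := Real.log_nonneg (by norm_num : (1:ℝ) ≤ 2)
          positivity
        · calc Real.log (‖G x 0 0‖) ≤ Real.log (2^(n+1)) :=
                Real.log_le_log (by linarith) (hbig x)
            _ = ((n:ℝ)+1) * Real.log 2 := by
              rw [Real.log_pow]
              push_cast
              ring
      have hl2 : Real.log 2 ≤ 0.6931471808 := Real.log_two_lt_d9.le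
      have hl2' : 0 ≤ Real.log 2 := Real.log_nonneg (by norm_num)
      nlinarith [h1, hn_le, hy, hl2, hl2']
    · -- small y
      set A : ℝ := sSup (Set.range fun t => ‖G t 0 0‖) with hA_def
      have hbdd : BddAbove (Set.range fun t => ‖G t 0 0‖) := by
        refine ⟨2^(n+1), ?_⟩
        rintro _ ⟨t, rfl⟩
        exact hbig t
      have hA : ∀ t, ‖G t 0 0‖ ≤ A := fun t => le_csSup hbdd ⟨t, rfl⟩
      have hA1 : 1 ≤ A := by
        have := hA c
        rw [(hbdry c (le_refl c)).1] at this
        simpa using this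
      have hbA : ∀ t, ‖G t 1 0‖ ≤ A * y := by
        intro t
        rw [hb t]
        have h1 : ‖∫ s in Iic t,
            (starRingEnd ℂ) (F s) * Complex.exp (-(2 * Complex.I * k * s)) * G s 0 0‖ ≤
            ∫ s in Iic t, ‖(starRingEnd ℂ) (F s) *
              Complex.exp (-(2 * Complex.I * k * s)) * G s 0 0‖ := by
          simpa using
            norm_integral_le_integral_norm (μ := volume.restrict (Iic t))
              (fun s => (starRingEnd ℂ) (F s) * Complex.exp (-(2 * Complex.I * k * s)) * G s 0 0)
        have h2 : (∫ s in Iic t, ‖(starRingEnd ℂ) (F s) *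
              Complex.exp (-(2 * Complex.I * k * s)) * G s 0 0‖) ≤ ∫ s in Iic t, A * f s := by
          refine setIntegral_mono_on ?_ ((hf.const_mul A).integrableOn) measurableSet_Iic ?_
          · have : Integrable fun s => ‖(starRingEnd ℂ) (F s) *
                Complex.exp (-(2 * Complex.I * k * s)) * G s 0 0‖ := by
              simpa using hIb.norm
            exact this.integrableOn
          · intro s _
            rw [hnorm_b s]
            calc f s * ‖G s 0 0‖ ≤ f s * A :=
                mul_le_mul_of_nonneg_left (hA s) (hfnn s)
              _ = A * f s := mul_comm _ _
        have h3 : (∫ s in Iic t, A * f s) ≤ A * y := by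
          rw [integral_const_mul]
          exact mul_le_mul_of_nonneg_left (hIic_y t) (by linarith)
        linarith
      have haA : ∀ w, ‖G w 0 0‖ ≤ 1 + (A*y)*y := by
        intro w
        rw [ha w]
        refine le_trans (norm_add_le _ _) ?_
        simp only [norm_one]
        have h1 : ‖∫ t in Iic w,
            F t * Complex.exp (2 * Complex.I * k * t) * G t 1 0‖ ≤
            ∫ t in Iic w, ‖F t * Complex.exp (2 * Complex.I * k * t) * G t 1 0‖ := by
          simpa using
            norm_integral_le_integral_norm (μ := volume.restrict (Iic w))
              (fun t => F t * Complex.exp (2 * Complex.I * k * t) * G t 1 0)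
        have h2 : (∫ t in Iic w, ‖F t * Complex.exp (2 * Complex.I * k * t) * G t 1 0‖)
            ≤ ∫ t in Iic w, (A*y) * f t := by
          refine setIntegral_mono_on ?_ ((hf.const_mul (A*y)).integrableOn) measurableSet_Iic ?_
          · have : Integrable fun t => ‖F t * Complex.exp (2 * Complex.I * k * t) * G t 1 0‖ := by
              simpa using hIa.norm
            exact this.integrableOn
          · intro t _
            rw [hnorm_a t]
            calc f t * ‖G t 1 0‖ ≤ f t * (A*y) :=
                mul_le_mul_of_nonneg_left (hbA t) (hfnn t)
              _ = (A*y) * f t := mul_comm _ _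
        have h3 : (∫ t in Iic w, (A*y) * f t) ≤ (A*y) * y := by
          rw [integral_const_mul]
          refine mul_le_mul_of_nonneg_left (hIic_y w) ?_
          have : (0:ℝ) ≤ A := by linarith
          positivity
        linarith
      have hAle : A ≤ 1 + A*y*y := by
        refine csSup_le (Set.range_nonempty _) ?_
        rintro _ ⟨t, rfl⟩
        have := haA t
        linarith
      have hA0 : (0:ℝ) ≤ A := le_trans zero_le_one hA1
      clear_value A
      have hA2 : A ≤ 2 := by
        have hyy : y*y ≤ 1/4 := by
          have := mul_le_mul hy.le hy.le hy0 (by norm_num : (0:ℝ) ≤ 1/2)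
          linarith
        have h4 : A*(y*y) ≤ A*(1/4) := mul_le_mul_of_nonneg_left hyy hA0
        have h5 : A*y*y = A*(y*y) := by ring
        linarith
      have hax : ‖G x 0 0‖ ≤ 1 + 2*y*y := by
        have h6 := haA x
        have h7 : A*(y*y) ≤ 2*(y*y) := mul_le_mul_of_nonneg_right hA2 (mul_self_nonneg y)
        have h8 : A*y*y = A*(y*y) := by ring
        linarith
      have h1 : Real.log (‖G x 0 0‖) ≤ Real.log (1 + 2*y*y) := by
        rcases le_or_gt (‖G x 0 0‖) 1 with h | h
        · exact le_trans (Real.log_nonpos (norm_nonneg _) h)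
            (Real.log_nonneg (by have := mul_self_nonneg y; linarith))
        · exact Real.log_le_log (by linarith) hax
      have h2 : Real.log (1 + 2*y*y) ≤ 2*y*y := by
        have := Real.log_le_sub_one_of_pos (by positivity : (0:ℝ) < 1 + 2*y*y)
        linarith
      have h9 : (3*y)^2 = 9*(y*y) := by ring
      have h10 := mul_self_nonneg y
      linarith only [h1, h2, h9, h10]
  have hs2 : Real.sqrt ((3*y)^2) = 3*y := Real.sqrt_sq (by positivity)
  calc Real.sqrt (Real.log (‖G x 0 0‖)) ≤ Real.sqrt ((3*y)^2) :=
        Real.sqrt_le_sqrt hkey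
    _ = 3*y := hs2
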